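/- Let κ be an infinite regular cardinal and λ a cardinal with λ > 2^κ. Then λ^κ = cf([λ]^{≤κ}, ⊆). -/

import Mathlib

open Cardinal

/-- `cf([Y]^{≤κ}, ⊆)`: the least cardinality of a family of subsets of `Y` of
cardinality `≤ κ` which is cofinal under inclusion among all such subsets. -/
noncomputable def covCof (Y : Type u) (κ : Cardinal.{u}) : Cardinal.{u} :=
  sInf {c : Cardinal.{u} |
    ∃ Q : Set {s : Set Y // #s ≤ κ}, #Q = c ∧
      ∀ a : {s : Set Y // #s ≤ κ}, ∃ b ∈ Q, a.1 ⊆ b.1}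

/-- If `κ` is an infinite regular cardinal and `λ > 2^κ`, then
`λ^κ = cf([λ]^{≤κ}, ⊆)`. -/
theorem stmt17 (κ lam : Cardinal.{u}) (hκ : κ.IsRegular)
    (hlam : (2 : Cardinal.{u}) ^ κ < lam) :
    lam ^ κ = covCof lam.ord.ToType κ := by
  set Y := lam.ord.ToType with hYdef
  have hY : #Y = lam := Cardinal.mk_ord_toType lam
  have hκ0 : ℵ₀ ≤ κ := hκ.aleph0_le
  have h2κ : ℵ₀ ≤ (2 : Cardinal.{u}) ^ κ :=
    hκ0.trans (le_trans (le_of_lt (cantor κ)) le_rfl)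
  have hL0 : ℵ₀ ≤ lam := h2κ.trans hlam.le
  have hmemuniv : (#{s : Set Y // #s ≤ κ}) ∈
      {c : Cardinal.{u} | ∃ Q : Set {s : Set Y // #s ≤ κ}, #Q = c ∧
        ∀ a : {s : Set Y // #s ≤ κ}, ∃ b ∈ Q, a.1 ⊆ b.1} := by
    refine ⟨Set.univ, by simp, fun a => ⟨a, Set.mem_univ a, subset_rfl⟩⟩
  have hne : Set.Nonempty
      {c : Cardinal.{u} | ∃ Q : Set {s : Set Y // #s ≤ κ}, #Q = c ∧
        ∀ a : {s : Set Y // #s ≤ κ}, ∃ b ∈ Q, a.1 ⊆ b.1} := ⟨_, hmemuniv⟩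
  apply le_antisymm
  · -- lam ^ κ ≤ covCof
    refine le_csInf hne ?_
    rintro c ⟨Q, hQc, hQcof⟩
    -- lam ^ κ = #(κ.out → Y)
    have hpow : lam ^ κ = #(Quotient.out κ → Y) := by
      rw [← power_def, hY, mk_out]
    -- injection into sigma
    have key : #(Quotient.out κ → Y) ≤ #Q * 2 ^ κ := by
      have hchoice : ∀ f : Quotient.out κ → Y,
          ∃ b : {s : Set Y // #s ≤ κ}, b ∈ Q ∧ Set.range f ⊆ b.1 := by
        intro f
        have hr : #(Set.range f) ≤ κ := by
          refine le_trans (mk_range_le) ?_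
          rw [mk_out κ]
        obtain ⟨b, hbQ, hb⟩ := hQcof ⟨Set.range f, hr⟩
        exact ⟨b, hbQ, hb⟩
      choose b hbQ hbsub using hchoice
      have hinj : Function.Injective
          (fun f : Quotient.out κ → Y =>
            (⟨⟨b f, hbQ f⟩, fun i => ⟨f i, hbsub f (Set.mem_range_self i)⟩⟩ :
              Σ q : Q, (Quotient.out κ → (q.1.1 : Set Y)))) := by
        have : Function.LeftInverse
            (fun p : Σ q : Q, (Quotient.out κ → (q.1.1 : Set Y)) =>
              (fun i => (p.2 i).1 : Quotient.out κ → Y))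
            (fun f : Quotient.out κ → Y =>
              (⟨⟨b f, hbQ f⟩, fun i => ⟨f i, hbsub f (Set.mem_range_self i)⟩⟩ :
                Σ q : Q, (Quotient.out κ → (q.1.1 : Set Y)))) := fun f => rfl
        exact this.injective
      calc #(Quotient.out κ → Y)
          ≤ #(Σ q : Q, (Quotient.out κ → (q.1.1 : Set Y))) := ⟨⟨_, hinj⟩⟩
        _ = Cardinal.sum (fun q : Q => #(Quotient.out κ → (q.1.1 : Set Y))) := mk_sigma _
        _ ≤ Cardinal.sum (fun _ : Q => (2 : Cardinal.{u}) ^ κ) := by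
            refine Cardinal.sum_le_sum _ _ fun q => ?_
            have h1 : #(Quotient.out κ → (q.1.1 : Set Y)) = (#(q.1.1 : Set Y)) ^ κ := by
              rw [← power_def, mk_out]
            rw [h1, ← power_self_eq hκ0]
            exact power_le_power_right q.1.2
        _ = #Q * 2 ^ κ := by rw [Cardinal.sum_const']
    have hle : lam ^ κ ≤ max (#Q) ((2 : Cardinal.{u}) ^ κ) := by
      rw [hpow]
      refine key.trans ?_
      refine (Cardinal.mul_le_max _ _).trans ?_
      exact max_le le_rfl (h2κ.trans (le_max_right _ _))
    rcases max_cases (#Q) ((2 : Cardinal.{u}) ^ κ) with ⟨heq, _⟩ | ⟨heq, _⟩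
    · rw [heq] at hle; rwa [hQc] at hle
    · exfalso
      rw [heq] at hle
      have : lam ≤ (2 : Cardinal.{u}) ^ κ :=
        le_trans (self_le_power lam (le_trans (by norm_num) hκ0)) hle
      exact absurd hlam (not_lt.mpr this)
  · -- covCof ≤ lam ^ κ
    refine (csInf_le' hmemuniv).trans ?_
    refine (mk_bounded_set_le Y κ).trans ?_
    rw [hY, max_eq_left hL0]
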